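/- Let V : S → [0,1] satisfy V(s) ≤ ε for all s in a set G of 'good' states, where V(s) = Pr over one step of (γ·(failure indicator) + γ·(stay-in-G continuation bounded by V)). Formally: if for all s ∈ G, γ·(p_fail(s) + E[V(s') · 𝟙(s' ∈ G)]) ≤ V(s) ≤ ε with γ = 1 and p_fail(s) = Pr(s' unsafe | s), and trajectories never leave G ∪ {unsafe}, then the probability of ever failing starting from G is at most ε. -/

import Mathlib

/-- Supermartingale safety bound. If `V : S → [0,1]` satisfies, on a
good set `G` (from which the chain only moves into `G` or the absorbing unsafe
set `U`), `p_fail(s) + ∑_{s'∈G} P(s,s')·V(s') ≤ V(s) ≤ ε`, then the probability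
of ever hitting `U` from `G` (its finite-horizon truncations `Hit n`) is ≤ `ε`. -/
theorem stmt_14 {S : Type*} [Fintype S] [DecidableEq S]
    (U G : Finset S) (hUG : Disjoint U G)
    (P : S → S → ℝ) (hP0 : ∀ s s', 0 ≤ P s s') (hP1 : ∀ s, ∑ s', P s s' = 1)
    (hclosed : ∀ s ∈ G, ∀ s', 0 < P s s' → s' ∈ G ∨ s' ∈ U)
    (habs : ∀ u ∈ U, ∀ s', 0 < P u s' → s' ∈ U)
    (ε : ℝ) (hε : 0 ≤ ε)
    (V : S → ℝ) (hV01 : ∀ s, V s ∈ Set.Icc (0:ℝ) 1)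
    (hsuper : ∀ s ∈ G, (∑ u ∈ U, P s u) + ∑ s' ∈ G, P s s' * V s' ≤ V s)
    (hVε : ∀ s ∈ G, V s ≤ ε)
    (Hit : ℕ → S → ℝ)
    (hHit0 : ∀ s, Hit 0 s = if s ∈ U then 1 else 0)
    (hHits : ∀ n s, Hit (n+1) s = if s ∈ U then 1 else ∑ s', P s s' * Hit n s') :
    ∀ s ∈ G, ∀ n, Hit n s ≤ ε := by
  -- Hit is ≤ 1 everywhere, and = 1 on U
  have hHitU : ∀ n, ∀ u ∈ U, Hit n u = 1 := by
    intro n u hu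
    cases n with
    | zero => simp [hHit0, hu]
    | succ m => simp [hHits, hu]
  have key : ∀ n, ∀ s ∈ G, Hit n s ≤ V s := by
    intro n
    induction n with
    | zero =>
      intro s hs
      have hsU : s ∉ U := fun h => (Finset.disjoint_left.mp hUG h) hs
      rw [hHit0]
      simp [hsU, (hV01 s).1]
    | succ m ih =>
      intro s hs
      have hsU : s ∉ U := fun h => (Finset.disjoint_left.mp hUG h) hs
      rw [hHits, if_neg hsU]
      have hsub : (U ∪ G : Finset S) ⊆ Finset.univ := Finset.subset_univ _
      have hzero : ∀ x ∈ Finset.univ, x ∉ U ∪ G → P s x * Hit m x = 0 := by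
        intro x _ hx
        rw [Finset.mem_union] at hx
        push_neg at hx
        have : P s x = 0 := by
          by_contra h
          have hpos : 0 < P s x := lt_of_le_of_ne (hP0 s x) (Ne.symm h)
          rcases hclosed s hs x hpos with h' | h'
          · exact hx.2 h'
          · exact hx.1 h'
        simp [this]
      rw [← Finset.sum_subset hsub hzero, Finset.sum_union hUG]
      have h1 : ∑ u ∈ U, P s u * Hit m u = ∑ u ∈ U, P s u := by
        apply Finset.sum_congr rfl
        intro u hu
        rw [hHitU m u hu, mul_one]
      have h2 : ∑ s' ∈ G, P s s' * Hit m s' ≤ ∑ s' ∈ G, P s s' * V s' := by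
        apply Finset.sum_le_sum
        intro s' hs'
        exact mul_le_mul_of_nonneg_left (ih s' hs') (hP0 s s')
      rw [h1]
      exact le_trans (add_le_add le_rfl h2) (hsuper s hs)
  intro s hs n
  exact le_trans (key n s hs) (hVε s hs)
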